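/- Let l ≥ 3, let f be a 5-L(2,1)-labeling of G(l), and let H be a connected component of H_1 or of H_2. If l is not a multiple of 3, then H contains no cycle; if l is a multiple of 3, then either H itself is a 3-cycle or H contains no cycle. -/

import Mathlib

/-- An L(2,1)-labeling of a simple graph: adjacent vertices get labels differing by
at least 2, and vertices at distance exactly 2 get distinct labels. -/
def IsL21Labeling {V : Type*} (G : SimpleGraph V) (f : V → ℕ) : Prop :=
  (∀ a b : V, G.Adj a b → 2 ≤ ((f a : ℤ) - (f b : ℤ)).natAbs) ∧
  (∀ a b : V, G.dist a b = 2 → f a ≠ f b)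

/-- A k-L(2,1)-labeling: an L(2,1)-labeling with all labels in {0, 1, ..., k}. -/
def IsKL21Labeling {V : Type*} (G : SimpleGraph V) (k : ℕ) (f : V → ℕ) : Prop :=
  IsL21Labeling G f ∧ ∀ a : V, f a ≤ k

/-- The λ-number of a graph: the least k such that G admits a k-L(2,1)-labeling. -/
noncomputable def lambdaNumber {V : Type*} (G : SimpleGraph V) : ℕ :=
  sInf {k : ℕ | ∃ f : V → ℕ, IsKL21Labeling G k f}

/-- The vertices of the graph G(l): u, v, x_1, ..., x_l, y_1, ..., y_l.
Here `x i` for `i : Fin l` stands for the paper's x_{i+1} (0-indexed). -/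
inductive GLVert (l : ℕ) : Type where
  | u : GLVert l
  | v : GLVert l
  | x : Fin l → GLVert l
  | y : Fin l → GLVert l

/-- The edge relation of G(l) (up to symmetrization):
x_i x_{i+1}, y_i y_{i+1}, x_i y_i, u x_1, u y_1, v x_l, v y_l. -/
def GLRel (l : ℕ) : GLVert l → GLVert l → Prop
  | .x i, .x j => (i : ℕ) + 1 = (j : ℕ)
  | .y i, .y j => (i : ℕ) + 1 = (j : ℕ)
  | .x i, .y j => i = j
  | .u, .x i => (i : ℕ) = 0
  | .u, .y i => (i : ℕ) = 0
  | .x i, .v => (i : ℕ) = l - 1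
  | .y i, .v => (i : ℕ) = l - 1
  | _, _ => False

/-- The graph G(l) from the paper. -/
def GLGraph (l : ℕ) : SimpleGraph (GLVert l) := SimpleGraph.fromRel (GLRel l)

/-- Vertices labelled with an even label 0, 2 or 4 (vertex set of H_1). -/
def H1Set (l : ℕ) (f : GLVert l → ℕ) : Set (GLVert l) :=
  {w | f w = 0 ∨ f w = 2 ∨ f w = 4}

/-- Vertices labelled with an odd label 1, 3 or 5 (vertex set of H_2). -/
def H2Set (l : ℕ) (f : GLVert l → ℕ) : Set (GLVert l) :=
  {w | f w = 1 ∨ f w = 3 ∨ f w = 5}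

/-- `T` is the vertex set of a connected component of the subgraph of `G` induced by `S`. -/
def IsCompOf {V : Type*} (G : SimpleGraph V) (S T : Set V) : Prop :=
  ∃ c : (G.induce S).ConnectedComponent,
    T = Subtype.val '' {w : S | (G.induce S).connectedComponentMk w = c}

/-- The induced subgraph on `T` is a 3-cycle. -/
def IsTriangleSet {V : Type*} (G : SimpleGraph V) (T : Set V) : Prop :=
  ∃ a b c : V, a ≠ b ∧ a ≠ c ∧ b ≠ c ∧ T = {a, b, c} ∧
    G.Adj a b ∧ G.Adj b c ∧ G.Adj a c

/-- There is a cycle of `G` all of whose vertices lie in `T`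
(equivalently, the induced subgraph on `T` contains a cycle). -/
def HasCycleIn {V : Type*} (G : SimpleGraph V) (T : Set V) : Prop :=
  ∃ (v : V) (wk : G.Walk v v), wk.IsCycle ∧ ∀ z ∈ wk.support, z ∈ T

/-! ### Finite-state machinery for label sequences -/

/-- Labels differ by at least 2. -/
def okc (p q : ℕ) : Prop := p + 2 ≤ q ∨ q + 2 ≤ p

instance (p q : ℕ) : Decidable (okc p q) := by unfold okc; infer_instance

lemma okc_symm {p q : ℕ} (h : okc p q) : okc q p := by unfold okc at *; omega

lemma okc_of_natAbs {m k : ℕ} (h : 2 ≤ ((m:ℤ) - (k:ℤ)).natAbs) : okc m k := by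
  unfold okc; omega

def LI : List (ℕ×ℕ×ℕ×ℕ×ℕ) := [(0,2,4,5,1), (0,4,2,1,5), (1,3,5,0,2), (1,5,3,2,0), (2,0,4,3,1), (2,0,4,5,1), (2,4,0,1,3), (2,4,0,1,5), (3,1,5,4,0), (3,1,5,4,2), (3,5,1,0,4), (3,5,1,2,4), (4,0,2,3,5), (4,2,0,5,3), (5,1,3,4,0), (5,3,1,0,4)]
def LA : List (ℕ×ℕ×ℕ×ℕ) := [(0,4,3,1), (0,4,5,2), (1,4,3,0), (1,4,5,2), (1,5,3,0), (1,5,4,2), (4,0,1,3), (4,0,2,5), (4,1,0,3), (4,1,2,5), (5,1,0,3), (5,1,2,4)]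
def LB : List (ℕ×ℕ×ℕ×ℕ) := [(0,3,2,5), (2,5,0,3), (3,0,5,2), (5,2,3,0)]
def LC : List (ℕ×ℕ×ℕ×ℕ) := [(0,3,4,1), (0,3,5,1), (2,5,4,0), (2,5,4,1), (3,0,1,4), (3,0,1,5), (5,2,0,4), (5,2,1,4)]

lemma D0 : ∀ e a0 b0 a1 b1 : Fin 6,
    (e:ℕ) % 2 = (a0:ℕ) % 2 → (a0:ℕ) % 2 = (b0:ℕ) % 2 →
    okc e a0 → okc e b0 → okc a0 b0 → okc a0 a1 → okc b0 b1 → okc a1 b1 →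
    (a1:ℕ) ≠ b0 → (b1:ℕ) ≠ a0 → (a1:ℕ) ≠ e → (b1:ℕ) ≠ e →
    ((e:ℕ),(a0:ℕ),(b0:ℕ),(a1:ℕ),(b1:ℕ)) ∈ LI := by decide

lemma D1 : ∀ s ∈ LI, ∀ g h : Fin 6,
    okc s.2.2.2.1 g → okc s.2.2.2.2 h → okc g h →
    (g:ℕ) ≠ s.2.2.2.2 → (h:ℕ) ≠ s.2.2.2.1 → (g:ℕ) ≠ s.2.1 → (h:ℕ) ≠ s.2.2.1 →
    (s.2.2.2.1, s.2.2.2.2, (g:ℕ), (h:ℕ)) ∈ LA := by decide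

lemma DAB : ∀ s ∈ LA, ∀ g h : Fin 6,
    okc s.2.2.1 g → okc s.2.2.2 h → okc g h →
    (g:ℕ) ≠ s.2.2.2 → (h:ℕ) ≠ s.2.2.1 → (g:ℕ) ≠ s.1 → (h:ℕ) ≠ s.2.1 →
    (s.2.2.1, s.2.2.2, (g:ℕ), (h:ℕ)) ∈ LB := by decide

lemma DBC : ∀ s ∈ LB, ∀ g h : Fin 6,
    okc s.2.2.1 g → okc s.2.2.2 h → okc g h →
    (g:ℕ) ≠ s.2.2.2 → (h:ℕ) ≠ s.2.2.1 → (g:ℕ) ≠ s.1 → (h:ℕ) ≠ s.2.1 →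
    (s.2.2.1, s.2.2.2, (g:ℕ), (h:ℕ)) ∈ LC := by decide

lemma DCA : ∀ s ∈ LC, ∀ g h : Fin 6,
    okc s.2.2.1 g → okc s.2.2.2 h → okc g h →
    (g:ℕ) ≠ s.2.2.2 → (h:ℕ) ≠ s.2.2.1 → (g:ℕ) ≠ s.1 → (h:ℕ) ≠ s.2.1 →
    (s.2.2.1, s.2.2.2, (g:ℕ), (h:ℕ)) ∈ LA := by decide

lemma DendB : ∀ s ∈ LB, ∀ e' : Fin 6,
    okc s.2.2.1 e' → okc s.2.2.2 e' → (e':ℕ) ≠ s.1 → (e':ℕ) ≠ s.2.1 → False := by decide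

lemma DendC : ∀ s ∈ LC, ∀ e' : Fin 6,
    okc s.2.2.1 e' → okc s.2.2.2 e' → (e':ℕ) ≠ s.1 → (e':ℕ) ≠ s.2.1 → False := by decide

lemma DP : ∀ e a0 b0 a1 : Fin 6,
    (e:ℕ) % 2 = (a0:ℕ) % 2 → (a0:ℕ) % 2 = (b0:ℕ) % 2 → (a1:ℕ) % 2 = (a0:ℕ) % 2 →
    okc e a0 → okc e b0 → okc a0 b0 → okc a0 a1 →
    (a1:ℕ) ≠ (b0:ℕ) → (a1:ℕ) ≠ (e:ℕ) → False := by decide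

/-- The key combinatorial fact: if a ladder-like label sequence of length `n` starts
with a monochromatic-parity triangle, then `3 ∣ n`. -/
theorem seqDiv (n : ℕ) (hn : 3 ≤ n) (a b : ℕ → ℕ) (e e' : ℕ)
    (hba : ∀ i, i < n → a i < 6) (hbb : ∀ i, i < n → b i < 6)
    (he : e < 6) (he' : e' < 6)
    (H2 : ∀ i, i < n → okc (a i) (b i))
    (H1a : ∀ i, i + 1 < n → okc (a i) (a (i+1)))
    (H1b : ∀ i, i + 1 < n → okc (b i) (b (i+1)))
    (H1c : ∀ i, i + 1 < n → a (i+1) ≠ b i)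
    (H1d : ∀ i, i + 1 < n → b (i+1) ≠ a i)
    (H3a : ∀ i, i + 2 < n → a (i+2) ≠ a i)
    (H3b : ∀ i, i + 2 < n → b (i+2) ≠ b i)
    (H4a : okc e (a 0)) (H4b : okc e (b 0)) (H4c : a 1 ≠ e) (H4d : b 1 ≠ e)
    (H5a : okc (a (n-1)) e') (H5b : okc (b (n-1)) e')
    (H5c : e' ≠ a (n-2)) (H5d : e' ≠ b (n-2))
    (HT1 : e % 2 = a 0 % 2) (HT2 : a 0 % 2 = b 0 % 2) : 3 ∣ n := by
  have key : ∀ i, 1 ≤ i → i + 1 < n →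
      (i % 3 = 1 → (a i, b i, a (i+1), b (i+1)) ∈ LA) ∧
      (i % 3 = 2 → (a i, b i, a (i+1), b (i+1)) ∈ LB) ∧
      (i % 3 = 0 → (a i, b i, a (i+1), b (i+1)) ∈ LC) := by
    intro i hi
    induction i, hi using Nat.le_induction with
    | base =>
      intro h2
      have h0 : (0:ℕ) < n := by omega
      have h1 : (1:ℕ) < n := by omega
      refine ⟨fun _ => ?_, fun hh => absurd hh (by omega), fun hh => absurd hh (by omega)⟩
      have hm0 : (e, a 0, b 0, a 1, b 1) ∈ LI :=
        D0 ⟨e, he⟩ ⟨a 0, hba 0 h0⟩ ⟨b 0, hbb 0 h0⟩ ⟨a 1, hba 1 h1⟩ ⟨b 1, hbb 1 h1⟩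
          HT1 HT2 H4a H4b (H2 0 h0) (H1a 0 h1) (H1b 0 h1) (H2 1 h1)
          (H1c 0 h1) (H1d 0 h1) H4c H4d
      exact D1 _ hm0 ⟨a 2, hba 2 h2⟩ ⟨b 2, hbb 2 h2⟩
        (H1a 1 h2) (H1b 1 h2) (H2 2 h2) (H1c 1 h2) (H1d 1 h2) (H3a 0 h2) (H3b 0 h2)
    | succ i hi ih =>
      intro h2
      have hi1 : i + 1 < n := by omega
      have hprev := ih hi1
      have hmod : i % 3 = 0 ∨ i % 3 = 1 ∨ i % 3 = 2 := by omega
      rcases hmod with h | h | h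
      · have nm := DCA _ (hprev.2.2 h) ⟨a (i+2), hba _ h2⟩ ⟨b (i+2), hbb _ h2⟩
          (H1a (i+1) h2) (H1b (i+1) h2) (H2 (i+2) h2)
          (H1c (i+1) h2) (H1d (i+1) h2) (H3a i h2) (H3b i h2)
        exact ⟨fun _ => nm, fun hh => absurd hh (by omega), fun hh => absurd hh (by omega)⟩
      · have nm := DAB _ (hprev.1 h) ⟨a (i+2), hba _ h2⟩ ⟨b (i+2), hbb _ h2⟩
          (H1a (i+1) h2) (H1b (i+1) h2) (H2 (i+2) h2)
          (H1c (i+1) h2) (H1d (i+1) h2) (H3a i h2) (H3b i h2)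
        exact ⟨fun hh => absurd hh (by omega), fun _ => nm, fun hh => absurd hh (by omega)⟩
      · have nm := DBC _ (hprev.2.1 h) ⟨a (i+2), hba _ h2⟩ ⟨b (i+2), hbb _ h2⟩
          (H1a (i+1) h2) (H1b (i+1) h2) (H2 (i+2) h2)
          (H1c (i+1) h2) (H1d (i+1) h2) (H3a i h2) (H3b i h2)
        exact ⟨fun hh => absurd hh (by omega), fun hh => absurd hh (by omega), fun _ => nm⟩
  have h1n : 1 ≤ n - 2 := by omega
  have h2n : (n - 2) + 1 < n := by omega
  have hk := key (n-2) h1n h2n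
  have e1 : n - 2 + 1 = n - 1 := by omega
  have hmod : (n-2) % 3 = 0 ∨ (n-2) % 3 = 1 ∨ (n-2) % 3 = 2 := by omega
  rcases hmod with h | h | h
  · exfalso
    have nm := hk.2.2 h
    rw [e1] at nm
    exact DendC _ nm ⟨e', he'⟩ H5a H5b H5c H5d
  · omega
  · exfalso
    have nm := hk.2.1 h
    rw [e1] at nm
    exact DendB _ nm ⟨e', he'⟩ H5a H5b H5c H5d

/-! ### Basic graph structure of G(l) -/

section GraphBasics

variable {l : ℕ}

lemma gl_adj_iff {a b : GLVert l} :
    (GLGraph l).Adj a b ↔ a ≠ b ∧ (GLRel l a b ∨ GLRel l b a) :=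
  SimpleGraph.fromRel_adj _ _ _

lemma adj_xy (i : Fin l) : (GLGraph l).Adj (.x i) (.y i) := by
  rw [gl_adj_iff]
  exact ⟨fun h => (by cases h), Or.inl rfl⟩

lemma adj_xx {i j : Fin l} (h : (i:ℕ) + 1 = (j:ℕ)) : (GLGraph l).Adj (.x i) (.x j) := by
  rw [gl_adj_iff]
  refine ⟨?_, Or.inl h⟩
  intro hc
  injection hc with hc
  subst hc
  omega

lemma adj_yy {i j : Fin l} (h : (i:ℕ) + 1 = (j:ℕ)) : (GLGraph l).Adj (.y i) (.y j) := by
  rw [gl_adj_iff]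
  refine ⟨?_, Or.inl h⟩
  intro hc
  injection hc with hc
  subst hc
  omega

lemma adj_ux {i : Fin l} (h : (i:ℕ) = 0) : (GLGraph l).Adj .u (.x i) := by
  rw [gl_adj_iff]
  exact ⟨fun h => (by cases h), Or.inl h⟩

lemma adj_uy {i : Fin l} (h : (i:ℕ) = 0) : (GLGraph l).Adj .u (.y i) := by
  rw [gl_adj_iff]
  exact ⟨fun h => (by cases h), Or.inl h⟩

lemma adj_xv {i : Fin l} (h : (i:ℕ) = l - 1) : (GLGraph l).Adj (.x i) .v := by
  rw [gl_adj_iff]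
  exact ⟨fun h => (by cases h), Or.inl h⟩

lemma adj_yv {i : Fin l} (h : (i:ℕ) = l - 1) : (GLGraph l).Adj (.y i) .v := by
  rw [gl_adj_iff]
  exact ⟨fun h => (by cases h), Or.inl h⟩

lemma nbr_u (h0 : 0 < l) {w : GLVert l} (h : (GLGraph l).Adj .u w) :
    w = .x ⟨0, h0⟩ ∨ w = .y ⟨0, h0⟩ := by
  rw [gl_adj_iff] at h
  obtain ⟨hne, h | h⟩ := h
  · cases w with
    | u => exact absurd rfl hne
    | v => exact (h : False).elim
    | x i =>
      left
      have : i = ⟨0, h0⟩ := Fin.ext (h : (i:ℕ) = 0)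
      rw [this]
    | y i =>
      right
      have : i = ⟨0, h0⟩ := Fin.ext (h : (i:ℕ) = 0)
      rw [this]
  · cases w with
    | u => exact absurd rfl hne
    | v => exact (h : False).elim
    | x i => exact (h : False).elim
    | y i => exact (h : False).elim

lemma nbr_v (h0 : 0 < l) {w : GLVert l} (h : (GLGraph l).Adj .v w) :
    w = .x ⟨l-1, by omega⟩ ∨ w = .y ⟨l-1, by omega⟩ := by
  rw [gl_adj_iff] at h
  obtain ⟨hne, h | h⟩ := h
  · cases w with
    | u => exact (h : False).elim
    | v => exact absurd rfl hne
    | x i => exact (h : False).elim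
    | y i => exact (h : False).elim
  · cases w with
    | u => exact (h : False).elim
    | v => exact absurd rfl hne
    | x i =>
      left
      have : i = ⟨l-1, by omega⟩ := Fin.ext (h : (i:ℕ) = l - 1)
      rw [this]
    | y i =>
      right
      have : i = ⟨l-1, by omega⟩ := Fin.ext (h : (i:ℕ) = l - 1)
      rw [this]

lemma nbr_x (i : Fin l) {w : GLVert l} (h : (GLGraph l).Adj (.x i) w) :
    w = .y i ∨ (∃ j : Fin l, w = .x j ∧ ((i:ℕ) + 1 = (j:ℕ) ∨ (j:ℕ) + 1 = (i:ℕ)))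
      ∨ (w = .u ∧ (i:ℕ) = 0) ∨ (w = .v ∧ (i:ℕ) = l - 1) := by
  rw [gl_adj_iff] at h
  obtain ⟨hne, h | h⟩ := h
  · cases w with
    | u => exact (h : False).elim
    | v => exact Or.inr (Or.inr (Or.inr ⟨rfl, h⟩))
    | x j => exact Or.inr (Or.inl ⟨j, rfl, Or.inl h⟩)
    | y j =>
      left
      have : j = i := ((h : i = j)).symm
      rw [this]
  · cases w with
    | u => exact Or.inr (Or.inr (Or.inl ⟨rfl, h⟩))
    | v => exact (h : False).elim
    | x j => exact Or.inr (Or.inl ⟨j, rfl, Or.inr h⟩)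
    | y j => exact (h : False).elim

lemma nbr_y (i : Fin l) {w : GLVert l} (h : (GLGraph l).Adj (.y i) w) :
    w = .x i ∨ (∃ j : Fin l, w = .y j ∧ ((i:ℕ) + 1 = (j:ℕ) ∨ (j:ℕ) + 1 = (i:ℕ)))
      ∨ (w = .u ∧ (i:ℕ) = 0) ∨ (w = .v ∧ (i:ℕ) = l - 1) := by
  rw [gl_adj_iff] at h
  obtain ⟨hne, h | h⟩ := h
  · cases w with
    | u => exact (h : False).elim
    | v => exact Or.inr (Or.inr (Or.inr ⟨rfl, h⟩))
    | x j => exact (h : False).elim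
    | y j => exact Or.inr (Or.inl ⟨j, rfl, Or.inl h⟩)
  · cases w with
    | u => exact Or.inr (Or.inr (Or.inl ⟨rfl, h⟩))
    | v => exact (h : False).elim
    | x j =>
      left
      have : j = i := (h : j = i)
      rw [this]
    | y j => exact Or.inr (Or.inl ⟨j, rfl, Or.inr h⟩)

lemma dist_eq_two' {V : Type*} {G : SimpleGraph V} {p q m : V} (hpq : p ≠ q)
    (hna : ¬ G.Adj p q) (h1 : G.Adj p m) (h2 : G.Adj m q) : G.dist p q = 2 := by
  have hw : G.dist p q ≤ 2 := by
    simpa using SimpleGraph.dist_le (SimpleGraph.Walk.cons h1 (SimpleGraph.Walk.cons h2 SimpleGraph.Walk.nil))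
  have h0 : G.dist p q ≠ 0 := by
    intro hc
    rcases SimpleGraph.dist_eq_zero_iff_eq_or_not_reachable.mp hc with h | h
    · exact hpq h
    · exact h ⟨SimpleGraph.Walk.cons h1 (SimpleGraph.Walk.cons h2 SimpleGraph.Walk.nil)⟩
  have hone : G.dist p q ≠ 1 := fun hc => hna (SimpleGraph.dist_eq_one_iff_adj.mp hc)
  omega

lemma d2_xx {i j : Fin l} (h : (i:ℕ) + 2 = (j:ℕ)) : (GLGraph l).dist (.x i) (.x j) = 2 := by
  have hjl := j.isLt
  have hm : (i:ℕ) + 1 < l := by omega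
  have a1 : (GLGraph l).Adj (.x i) (.x ⟨(i:ℕ)+1, hm⟩) := adj_xx rfl
  have a2 : (GLGraph l).Adj (.x ⟨(i:ℕ)+1, hm⟩) (.x j) := adj_xx (by simp; omega)
  refine dist_eq_two' ?_ ?_ a1 a2
  · intro hc; injection hc with hc; rw [hc] at h; omega
  · intro hadj
    rw [gl_adj_iff] at hadj
    obtain ⟨_, hr | hr⟩ := hadj
    · have hv : (i:ℕ) + 1 = (j:ℕ) := hr; omega
    · have hv : (j:ℕ) + 1 = (i:ℕ) := hr; omega

lemma d2_yy {i j : Fin l} (h : (i:ℕ) + 2 = (j:ℕ)) : (GLGraph l).dist (.y i) (.y j) = 2 := by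
  have hjl := j.isLt
  have hm : (i:ℕ) + 1 < l := by omega
  have a1 : (GLGraph l).Adj (.y i) (.y ⟨(i:ℕ)+1, hm⟩) := adj_yy rfl
  have a2 : (GLGraph l).Adj (.y ⟨(i:ℕ)+1, hm⟩) (.y j) := adj_yy (by simp; omega)
  refine dist_eq_two' ?_ ?_ a1 a2
  · intro hc; injection hc with hc; rw [hc] at h; omega
  · intro hadj
    rw [gl_adj_iff] at hadj
    obtain ⟨_, hr | hr⟩ := hadj
    · have hv : (i:ℕ) + 1 = (j:ℕ) := hr; omega
    · have hv : (j:ℕ) + 1 = (i:ℕ) := hr; omega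

lemma d2_xy {i j : Fin l} (h : (i:ℕ) + 1 = (j:ℕ)) : (GLGraph l).dist (.x i) (.y j) = 2 := by
  refine dist_eq_two' (fun hc => (by cases hc)) ?_ (adj_xy i) (adj_yy h)
  intro hadj
  rw [gl_adj_iff] at hadj
  obtain ⟨_, hr | hr⟩ := hadj
  · have hv : i = j := hr
    rw [hv] at h; omega
  · have hF : False := hr; exact hF.elim

lemma d2_yx {i j : Fin l} (h : (i:ℕ) + 1 = (j:ℕ)) : (GLGraph l).dist (.y i) (.x j) = 2 := by
  refine dist_eq_two' (fun hc => (by cases hc)) ?_ (adj_xy i).symm (adj_xx h)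
  intro hadj
  rw [gl_adj_iff] at hadj
  obtain ⟨_, hr | hr⟩ := hadj
  · have hF : False := hr; exact hF.elim
  · have hv : j = i := hr
    rw [hv] at h; omega

lemma d2_ux (h1 : 1 < l) : (GLGraph l).dist .u (.x ⟨1, h1⟩) = 2 := by
  refine dist_eq_two' (fun hc => (by cases hc)) ?_
    (adj_ux (i := ⟨0, by omega⟩) rfl) (adj_xx (by simp))
  intro hadj
  rw [gl_adj_iff] at hadj
  obtain ⟨_, hr | hr⟩ := hadj
  · have hv : ((⟨1, h1⟩ : Fin l):ℕ) = 0 := hr; simp at hv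
  · have hF : False := hr; exact hF.elim

lemma d2_uy (h1 : 1 < l) : (GLGraph l).dist .u (.y ⟨1, h1⟩) = 2 := by
  refine dist_eq_two' (fun hc => (by cases hc)) ?_
    (adj_uy (i := ⟨0, by omega⟩) rfl) (adj_yy (by simp))
  intro hadj
  rw [gl_adj_iff] at hadj
  obtain ⟨_, hr | hr⟩ := hadj
  · have hv : ((⟨1, h1⟩ : Fin l):ℕ) = 0 := hr; simp at hv
  · have hF : False := hr; exact hF.elim

lemma d2_vx (h2 : 2 ≤ l) : (GLGraph l).dist .v (.x ⟨l-2, by omega⟩) = 2 := by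
  refine dist_eq_two' (fun hc => (by cases hc)) ?_
    (adj_xv (i := ⟨l-1, by omega⟩) rfl).symm (adj_xx (by simp; omega)).symm
  intro hadj
  rw [gl_adj_iff] at hadj
  obtain ⟨_, hr | hr⟩ := hadj
  · have hF : False := hr; exact hF.elim
  · have hv : ((⟨l-2, by omega⟩ : Fin l):ℕ) = l - 1 := hr; simp at hv; omega

lemma d2_vy (h2 : 2 ≤ l) : (GLGraph l).dist .v (.y ⟨l-2, by omega⟩) = 2 := by
  refine dist_eq_two' (fun hc => (by cases hc)) ?_
    (adj_yv (i := ⟨l-1, by omega⟩) rfl).symm (adj_yy (by simp; omega)).symm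
  intro hadj
  rw [gl_adj_iff] at hadj
  obtain ⟨_, hr | hr⟩ := hadj
  · have hF : False := hr; exact hF.elim
  · have hv : ((⟨l-2, by omega⟩ : Fin l):ℕ) = l - 1 := hr; simp at hv; omega

end GraphBasics

/-! ### Label sequences along the ladder -/

/-- `f x_m` as a function of the natural index `m`. -/
def Fx (l : ℕ) (f : GLVert l → ℕ) (m : ℕ) : ℕ := if h : m < l then f (.x ⟨m, h⟩) else 0

/-- `f y_m` as a function of the natural index `m`. -/
def Fy (l : ℕ) (f : GLVert l → ℕ) (m : ℕ) : ℕ := if h : m < l then f (.y ⟨m, h⟩) else 0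

lemma Fx_eq {l : ℕ} (f : GLVert l → ℕ) {m : ℕ} (h : m < l) : Fx l f m = f (.x ⟨m, h⟩) :=
  dif_pos h

lemma Fy_eq {l : ℕ} (f : GLVert l → ℕ) {m : ℕ} (h : m < l) : Fy l f m = f (.y ⟨m, h⟩) :=
  dif_pos h

lemma Fx_fin {l : ℕ} (f : GLVert l → ℕ) (i : Fin l) : Fx l f (i:ℕ) = f (.x i) := by
  rw [Fx_eq f i.isLt]

lemma Fy_fin {l : ℕ} (f : GLVert l → ℕ) (i : Fin l) : Fy l f (i:ℕ) = f (.y i) := by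
  rw [Fy_eq f i.isLt]

section GraphFacts

variable {l : ℕ} {f : GLVert l → ℕ} (hf : IsKL21Labeling (GLGraph l) 5 f)

include hf

lemma GFbx : ∀ i, i < l → Fx l f i < 6 := by
  intro i h
  rw [Fx_eq f h]
  have := hf.2 (.x ⟨i, h⟩)
  omega

lemma GFby : ∀ i, i < l → Fy l f i < 6 := by
  intro i h
  rw [Fy_eq f h]
  have := hf.2 (.y ⟨i, h⟩)
  omega

lemma GF2 : ∀ i, i < l → okc (Fx l f i) (Fy l f i) := by
  intro i h
  rw [Fx_eq f h, Fy_eq f h]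
  exact okc_of_natAbs (hf.1.1 _ _ (adj_xy ⟨i, h⟩))

lemma GF1a : ∀ i, i + 1 < l → okc (Fx l f i) (Fx l f (i+1)) := by
  intro i h
  rw [Fx_eq f (by omega : i < l), Fx_eq f h]
  exact okc_of_natAbs (hf.1.1 _ _ (adj_xx rfl))

lemma GF1b : ∀ i, i + 1 < l → okc (Fy l f i) (Fy l f (i+1)) := by
  intro i h
  rw [Fy_eq f (by omega : i < l), Fy_eq f h]
  exact okc_of_natAbs (hf.1.1 _ _ (adj_yy rfl))

lemma GF1c : ∀ i, i + 1 < l → Fx l f (i+1) ≠ Fy l f i := by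
  intro i h
  rw [Fx_eq f h, Fy_eq f (by omega : i < l)]
  exact (hf.1.2 _ _ (d2_yx (i := ⟨i, by omega⟩) (j := ⟨i+1, h⟩) rfl)).symm

lemma GF1d : ∀ i, i + 1 < l → Fy l f (i+1) ≠ Fx l f i := by
  intro i h
  rw [Fy_eq f h, Fx_eq f (by omega : i < l)]
  exact (hf.1.2 _ _ (d2_xy (i := ⟨i, by omega⟩) (j := ⟨i+1, h⟩) rfl)).symm

lemma GF3a : ∀ i, i + 2 < l → Fx l f (i+2) ≠ Fx l f i := by
  intro i h
  rw [Fx_eq f h, Fx_eq f (by omega : i < l)]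
  exact (hf.1.2 _ _ (d2_xx (i := ⟨i, by omega⟩) (j := ⟨i+2, h⟩) rfl)).symm

lemma GF3b : ∀ i, i + 2 < l → Fy l f (i+2) ≠ Fy l f i := by
  intro i h
  rw [Fy_eq f h, Fy_eq f (by omega : i < l)]
  exact (hf.1.2 _ _ (d2_yy (i := ⟨i, by omega⟩) (j := ⟨i+2, h⟩) rfl)).symm

lemma GF4a (h0 : 0 < l) : okc (f .u) (Fx l f 0) := by
  rw [Fx_eq f h0]
  exact okc_of_natAbs (hf.1.1 _ _ (adj_ux rfl))

lemma GF4b (h0 : 0 < l) : okc (f .u) (Fy l f 0) := by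
  rw [Fy_eq f h0]
  exact okc_of_natAbs (hf.1.1 _ _ (adj_uy rfl))

lemma GF4c (h1 : 1 < l) : Fx l f 1 ≠ f .u := by
  rw [Fx_eq f h1]
  exact (hf.1.2 _ _ (d2_ux h1)).symm

lemma GF4d (h1 : 1 < l) : Fy l f 1 ≠ f .u := by
  rw [Fy_eq f h1]
  exact (hf.1.2 _ _ (d2_uy h1)).symm

lemma GF5a (h0 : 0 < l) : okc (Fx l f (l-1)) (f .v) := by
  rw [Fx_eq f (by omega : l - 1 < l)]
  exact okc_of_natAbs (hf.1.1 _ _ (adj_xv rfl))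

lemma GF5b (h0 : 0 < l) : okc (Fy l f (l-1)) (f .v) := by
  rw [Fy_eq f (by omega : l - 1 < l)]
  exact okc_of_natAbs (hf.1.1 _ _ (adj_yv rfl))

lemma GF5c (h2 : 2 ≤ l) : f .v ≠ Fx l f (l-2) := by
  rw [Fx_eq f (by omega : l - 2 < l)]
  exact hf.1.2 _ _ (d2_vx h2)

lemma GF5d (h2 : 2 ≤ l) : f .v ≠ Fy l f (l-2) := by
  rw [Fy_eq f (by omega : l - 2 < l)]
  exact hf.1.2 _ _ (d2_vy h2)

end GraphFacts

/-! ### No monochromatic square, and parity propagation -/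

section Parity

variable {l : ℕ} {f : GLVert l → ℕ} (hf : IsKL21Labeling (GLGraph l) 5 f)

include hf

/-- No "square" of the ladder is monochromatic in parity. -/
lemma noSquare (p : ℕ) : ∀ i, i + 1 < l →
    ¬ (Fx l f i % 2 = p ∧ Fy l f i % 2 = p ∧ Fx l f (i+1) % 2 = p ∧ Fy l f (i+1) % 2 = p) := by
  intro i h hsq
  obtain ⟨e1, e2, e3, e4⟩ := hsq
  have b1 := GFbx hf i (by omega)
  have b2 := GFby hf i (by omega)
  have b3 := GFbx hf (i+1) h
  have b4 := GFby hf (i+1) h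
  have c1 := GF2 hf i (by omega)
  have c2 := GF2 hf (i+1) h
  have c3 := GF1a hf i h
  have c4 := GF1b hf i h
  have c5 := GF1c hf i h
  have c6 := GF1d hf i h
  unfold okc at c1 c2 c3 c4
  omega

/-- If the `u`-triangle is monochromatic in parity, the next rung is not. -/
lemma parityNextU (hl : 3 ≤ l) (p : ℕ) (h1 : f .u % 2 = p) (h2 : Fx l f 0 % 2 = p)
    (h3 : Fy l f 0 % 2 = p) : Fx l f 1 % 2 ≠ p ∧ Fy l f 1 % 2 ≠ p := by
  have b0 : f .u < 6 := by have := hf.2 (GLVert.u); omega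
  have b1 := GFbx hf 0 (by omega)
  have b2 := GFby hf 0 (by omega)
  have b3 := GFbx hf 1 (by omega)
  have b4 := GFby hf 1 (by omega)
  have c1 := GF4a hf (by omega)
  have c2 := GF4b hf (by omega)
  have c3 := GF2 hf 0 (by omega)
  have c4 : okc (Fx l f 0) (Fx l f 1) := GF1a hf 0 (by omega)
  have c5 : okc (Fy l f 0) (Fy l f 1) := GF1b hf 0 (by omega)
  have c6 : Fx l f 1 ≠ Fy l f 0 := GF1c hf 0 (by omega)
  have c7 : Fy l f 1 ≠ Fx l f 0 := GF1d hf 0 (by omega)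
  have c8 := GF4c hf (by omega)
  have c9 := GF4d hf (by omega)
  constructor
  · intro hc
    exact DP ⟨f .u, b0⟩ ⟨Fx l f 0, b1⟩ ⟨Fy l f 0, b2⟩ ⟨Fx l f 1, b3⟩
      (show f GLVert.u % 2 = Fx l f 0 % 2 by omega)
      (show Fx l f 0 % 2 = Fy l f 0 % 2 by omega)
      (show Fx l f 1 % 2 = Fx l f 0 % 2 by omega) c1 c2 c3 c4 c6 c8
  · intro hc
    exact DP ⟨f .u, b0⟩ ⟨Fy l f 0, b2⟩ ⟨Fx l f 0, b1⟩ ⟨Fy l f 1, b4⟩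
      (show f GLVert.u % 2 = Fy l f 0 % 2 by omega)
      (show Fy l f 0 % 2 = Fx l f 0 % 2 by omega)
      (show Fy l f 1 % 2 = Fy l f 0 % 2 by omega) c2 c1 (okc_symm c3) c5 c7 c9

/-- If the `v`-triangle is monochromatic in parity, the previous rung is not. -/
lemma parityNextV (hl : 3 ≤ l) (p : ℕ) (h1 : f .v % 2 = p) (h2 : Fx l f (l-1) % 2 = p)
    (h3 : Fy l f (l-1) % 2 = p) : Fx l f (l-2) % 2 ≠ p ∧ Fy l f (l-2) % 2 ≠ p := by
  have b0 : f .v < 6 := by have := hf.2 (GLVert.v); omega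
  have b1 := GFbx hf (l-1) (by omega)
  have b2 := GFby hf (l-1) (by omega)
  have b3 := GFbx hf (l-2) (by omega)
  have b4 := GFby hf (l-2) (by omega)
  have c1 := GF5a hf (by omega)
  have c2 := GF5b hf (by omega)
  have c3 := GF2 hf (l-1) (by omega)
  have e2 : l - 2 + 1 = l - 1 := by omega
  have c4 := GF1a hf (l-2) (by omega)
  have c5 := GF1b hf (l-2) (by omega)
  have c6 := GF1c hf (l-2) (by omega)
  have c7 := GF1d hf (l-2) (by omega)
  rw [e2] at c4 c5 c6 c7
  have c8 := GF5c hf (by omega)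
  have c9 := GF5d hf (by omega)
  constructor
  · intro hc
    exact DP ⟨f .v, b0⟩ ⟨Fx l f (l-1), b1⟩ ⟨Fy l f (l-1), b2⟩ ⟨Fx l f (l-2), b3⟩
      (show f GLVert.v % 2 = Fx l f (l-1) % 2 by omega)
      (show Fx l f (l-1) % 2 = Fy l f (l-1) % 2 by omega)
      (show Fx l f (l-2) % 2 = Fx l f (l-1) % 2 by omega)
      (okc_symm c1) (okc_symm c2) c3 (okc_symm c4)
      (Ne.symm c7) (Ne.symm c8)
  · intro hc
    exact DP ⟨f .v, b0⟩ ⟨Fy l f (l-1), b2⟩ ⟨Fx l f (l-1), b1⟩ ⟨Fy l f (l-2), b4⟩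
      (show f GLVert.v % 2 = Fy l f (l-1) % 2 by omega)
      (show Fy l f (l-1) % 2 = Fx l f (l-1) % 2 by omega)
      (show Fy l f (l-2) % 2 = Fy l f (l-1) % 2 by omega)
      (okc_symm c2) (okc_symm c1) (okc_symm c3) (okc_symm c5)
      (Ne.symm c6) (Ne.symm c9)

/-- Monochromatic triangle at `u` forces `3 ∣ l`. -/
lemma triU (hl : 3 ≤ l) (p : ℕ) (h1 : f .u % 2 = p) (h2 : Fx l f 0 % 2 = p)
    (h3 : Fy l f 0 % 2 = p) : 3 ∣ l := by
  refine seqDiv l hl (Fx l f) (Fy l f) (f .u) (f .v) (GFbx hf) (GFby hf)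
    (by have := hf.2 (GLVert.u); omega) (by have := hf.2 (GLVert.v); omega)
    (GF2 hf) (GF1a hf) (GF1b hf) (GF1c hf) (GF1d hf) (GF3a hf) (GF3b hf)
    (GF4a hf (by omega)) (GF4b hf (by omega)) (GF4c hf (by omega)) (GF4d hf (by omega))
    (okc_symm ?_) (okc_symm ?_) ?_ ?_ (by omega) (by omega)
  · exact okc_symm (GF5a hf (by omega))
  · exact okc_symm (GF5b hf (by omega))
  · exact GF5c hf (by omega)
  · exact GF5d hf (by omega)

/-- Monochromatic triangle at `v` forces `3 ∣ l`. -/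
lemma triV (hl : 3 ≤ l) (p : ℕ) (h1 : f .v % 2 = p) (h2 : Fx l f (l-1) % 2 = p)
    (h3 : Fy l f (l-1) % 2 = p) : 3 ∣ l := by
  refine seqDiv l hl (fun i => Fx l f (l-1-i)) (fun i => Fy l f (l-1-i)) (f .v) (f .u)
    (fun i hi => GFbx hf _ (by omega)) (fun i hi => GFby hf _ (by omega))
    (by have := hf.2 (GLVert.v); omega) (by have := hf.2 (GLVert.u); omega)
    (fun i hi => GF2 hf _ (by omega)) ?_ ?_ ?_ ?_ ?_ ?_ ?_ ?_ ?_ ?_ ?_ ?_ ?_ ?_ ?_ ?_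
  · intro i hi
    have hgf := GF1a hf (l-1-(i+1)) (by omega)
    have e : l - 1 - (i+1) + 1 = l - 1 - i := by omega
    rw [e] at hgf
    exact okc_symm hgf
  · intro i hi
    have hgf := GF1b hf (l-1-(i+1)) (by omega)
    have e : l - 1 - (i+1) + 1 = l - 1 - i := by omega
    rw [e] at hgf
    exact okc_symm hgf
  · intro i hi
    have hgf := GF1d hf (l-1-(i+1)) (by omega)
    have e : l - 1 - (i+1) + 1 = l - 1 - i := by omega
    rw [e] at hgf
    exact hgf.symm
  · intro i hi
    have hgf := GF1c hf (l-1-(i+1)) (by omega)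
    have e : l - 1 - (i+1) + 1 = l - 1 - i := by omega
    rw [e] at hgf
    exact hgf.symm
  · intro i hi
    have hgf := GF3a hf (l-1-(i+2)) (by omega)
    have e : l - 1 - (i+2) + 2 = l - 1 - i := by omega
    rw [e] at hgf
    exact hgf.symm
  · intro i hi
    have hgf := GF3b hf (l-1-(i+2)) (by omega)
    have e : l - 1 - (i+2) + 2 = l - 1 - i := by omega
    rw [e] at hgf
    exact hgf.symm
  · beta_reduce
    have e : l - 1 - 0 = l - 1 := by omega
    rw [e]
    exact okc_symm (GF5a hf (by omega))
  · beta_reduce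
    have e : l - 1 - 0 = l - 1 := by omega
    rw [e]
    exact okc_symm (GF5b hf (by omega))
  · beta_reduce
    have e : l - 1 - 1 = l - 2 := by omega
    rw [e]
    exact (GF5c hf (by omega)).symm
  · beta_reduce
    have e : l - 1 - 1 = l - 2 := by omega
    rw [e]
    exact (GF5d hf (by omega)).symm
  · beta_reduce
    have e : l - 1 - (l-1) = 0 := by omega
    rw [e]
    exact okc_symm (GF4a hf (by omega))
  · beta_reduce
    have e : l - 1 - (l-1) = 0 := by omega
    rw [e]
    exact okc_symm (GF4b hf (by omega))
  · beta_reduce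
    have e : l - 1 - (l-2) = 1 := by omega
    rw [e]
    exact (GF4c hf (by omega)).symm
  · beta_reduce
    have e : l - 1 - (l-2) = 1 := by omega
    rw [e]
    exact (GF4d hf (by omega)).symm
  · beta_reduce
    have e : l - 1 - 0 = l - 1 := by omega
    rw [e]
    omega
  · beta_reduce
    have e : l - 1 - 0 = l - 1 := by omega
    rw [e]
    omega

end Parity

/-! ### Every vertex of a cycle has two distinct neighbours on the cycle -/

lemma nbr_of_cycle {V : Type*} {G : SimpleGraph V} {r z : V} {wk : G.Walk r r}
    (hc : wk.IsCycle) (hz : z ∈ wk.support) :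
    ∃ s t, s ≠ t ∧ G.Adj z s ∧ G.Adj z t ∧ s ∈ wk.support ∧ t ∈ wk.support := by
  classical
  have hc' := hc.rotate hz
  have hmem : ∀ w, w ∈ (wk.rotate z hz).support → w ∈ wk.support := by
    intro w hw
    have hperm := SimpleGraph.Walk.support_rotate wk z hz
    rw [SimpleGraph.Walk.support_eq_cons] at hw
    rcases List.mem_cons.mp hw with rfl | hw
    · exact hz
    · exact List.mem_of_mem_tail (hperm.mem_iff.mp hw)
  generalize hg : wk.rotate z hz = c at hc' hmem
  cases c with
  | nil => exact absurd rfl hc'.ne_nil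
  | @cons _ s' _ hadj q =>
    rw [SimpleGraph.Walk.cons_isCycle_iff] at hc'
    obtain ⟨hq, he⟩ := hc'
    cases hqr : q.reverse with
    | nil =>
      exact absurd rfl hadj.ne
    | @cons _ t' _ hadj2 q2 =>
      have ht'q : t' ∈ q.support := by
        have h1 : t' ∈ q.reverse.support := by
          rw [hqr, SimpleGraph.Walk.support_cons]
          exact List.mem_cons_of_mem _ q2.start_mem_support
        rwa [SimpleGraph.Walk.support_reverse, List.mem_reverse] at h1
      have hs'q : s' ∈ q.support := q.start_mem_support
      have hne : s' ≠ t' := by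
        rintro rfl
        apply he
        have h2 : s(z, s') ∈ q.reverse.edges := by
          rw [hqr, SimpleGraph.Walk.edges_cons]
          exact List.mem_cons_self
        rwa [SimpleGraph.Walk.edges_reverse, List.mem_reverse] at h2
      refine ⟨s', t', hne, hadj, hadj2, hmem _ ?_, hmem _ ?_⟩
      · rw [SimpleGraph.Walk.support_cons]
        exact List.mem_cons_of_mem _ hs'q
      · rw [SimpleGraph.Walk.support_cons]
        exact List.mem_cons_of_mem _ ht'q

/-- Height function used to pick a maximal vertex of a cycle. -/
def HtV (l : ℕ) : GLVert l → ℕ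
  | .u => 0
  | .v => l + 1
  | .x i => (i:ℕ) + 1
  | .y i => (i:ℕ) + 1

/-- Any cycle whose support is monochromatic in parity contains one of the
two end-triangles of `G(l)`. -/
lemma cyc {l : ℕ} {f : GLVert l → ℕ} (hf : IsKL21Labeling (GLGraph l) 5 f) (hl : 3 ≤ l)
    (p : ℕ) {r : GLVert l} {wk : (GLGraph l).Walk r r} (hcy : wk.IsCycle)
    (hs : ∀ z ∈ wk.support, f z % 2 = p) :
    (GLVert.u ∈ wk.support ∧ GLVert.x ⟨0, by omega⟩ ∈ wk.support ∧
      GLVert.y ⟨0, by omega⟩ ∈ wk.support) ∨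
    (GLVert.v ∈ wk.support ∧ GLVert.x ⟨l-1, by omega⟩ ∈ wk.support ∧
      GLVert.y ⟨l-1, by omega⟩ ∈ wk.support) := by
  classical
  obtain ⟨z, hzmem', hzmax'⟩ : ∃ z ∈ wk.support.toFinset,
      ∀ w ∈ wk.support.toFinset, HtV l w ≤ HtV l z :=
    Finset.exists_max_image wk.support.toFinset (HtV l)
      ⟨r, List.mem_toFinset.mpr wk.start_mem_support⟩
  have hzmem : z ∈ wk.support := List.mem_toFinset.mp hzmem'
  have hmax : ∀ w, w ∈ wk.support → HtV l w ≤ HtV l z :=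
    fun w hw => hzmax' w (List.mem_toFinset.mpr hw)
  obtain ⟨s, t, hst, hzs, hzt, hsS, htS⟩ := nbr_of_cycle hcy hzmem
  cases z with
  | u =>
    exfalso
    have h1 := hmax s hsS
    rcases nbr_u (show 0 < l by omega) hzs with h | h <;>
      · rw [h] at h1
        have h2 : (1:ℕ) ≤ 0 := h1
        omega
  | v =>
    have hn1 := nbr_v (show 0 < l by omega) hzs
    have hn2 := nbr_v (show 0 < l by omega) hzt
    right
    refine ⟨hzmem, ?_, ?_⟩
    · rcases hn1 with rfl | rfl
      · exact hsS
      · rcases hn2 with rfl | rfl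
        · exact htS
        · exact absurd rfl hst
    · rcases hn1 with rfl | rfl
      · rcases hn2 with rfl | rfl
        · exact absurd rfl hst
        · exact htS
      · exact hsS
  | x i =>
    have hfil : ∀ w, (GLGraph l).Adj (.x i) w → w ∈ wk.support →
        (w = .y i ∨ (∃ j : Fin l, w = .x j ∧ (j:ℕ) + 1 = (i:ℕ))
          ∨ ((i:ℕ) = 0 ∧ w = .u)) := by
      intro w hw hwS
      have hle := hmax w hwS
      rcases nbr_x i hw with h | ⟨j, rfl, hj | hj⟩ | ⟨rfl, h0⟩ | ⟨rfl, hlm⟩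
      · exact Or.inl h
      · exfalso
        have hle' : (j:ℕ) + 1 ≤ (i:ℕ) + 1 := hle
        omega
      · exact Or.inr (Or.inl ⟨j, rfl, hj⟩)
      · exact Or.inr (Or.inr ⟨h0, rfl⟩)
      · exfalso
        have hle' : l + 1 ≤ (i:ℕ) + 1 := hle
        have := i.isLt
        omega
    have hyiS : GLVert.y i ∈ wk.support ∧
        ((∃ j : Fin l, (j:ℕ) + 1 = (i:ℕ) ∧ GLVert.x j ∈ wk.support)
          ∨ ((i:ℕ) = 0 ∧ GLVert.u ∈ wk.support)) := by
      rcases hfil s hzs hsS with h1 | ⟨j1, rfl, hj1⟩ | ⟨hi0, rfl⟩ <;>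
        rcases hfil t hzt htS with h2 | ⟨j2, rfl, hj2⟩ | ⟨hi0', rfl⟩
      · subst h1; exact absurd h2.symm hst
      · subst h1; exact ⟨hsS, Or.inl ⟨j2, hj2, htS⟩⟩
      · subst h1; exact ⟨hsS, Or.inr ⟨hi0', htS⟩⟩
      · subst h2; exact ⟨htS, Or.inl ⟨j1, hj1, hsS⟩⟩
      · exfalso
        have : j1 = j2 := Fin.ext (by omega)
        rw [this] at hst
        exact hst rfl
      · exfalso; omega
      · subst h2; exact ⟨htS, Or.inr ⟨hi0, hsS⟩⟩
      · exfalso; omega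
      · exact absurd rfl hst
    obtain ⟨hyi, hrest⟩ := hyiS
    rcases hrest with ⟨j, hj, hxj⟩ | ⟨hi0, huS⟩
    · -- second stage: neighbours of y i
      exfalso
      obtain ⟨s', t', hst2, hys, hyt, hs'S, ht'S⟩ := nbr_of_cycle hcy hyi
      have hfilY : ∀ w, (GLGraph l).Adj (.y i) w → w ∈ wk.support →
          (w = .x i ∨ (∃ j' : Fin l, w = .y j' ∧ (j':ℕ) + 1 = (i:ℕ))
            ∨ ((i:ℕ) = 0 ∧ w = .u)) := by
        intro w hw hwS
        have hle := hmax w hwS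
        rcases nbr_y i hw with h | ⟨j', rfl, hj' | hj'⟩ | ⟨rfl, h0⟩ | ⟨rfl, hlm⟩
        · exact Or.inl h
        · exfalso
          have hle' : (j':ℕ) + 1 ≤ (i:ℕ) + 1 := hle
          omega
        · exact Or.inr (Or.inl ⟨j', rfl, hj'⟩)
        · exact Or.inr (Or.inr ⟨h0, rfl⟩)
        · exfalso
          have hle' : l + 1 ≤ (i:ℕ) + 1 := hle
          have := i.isLt
          omega
      have hyj : GLVert.y j ∈ wk.support := by
        rcases hfilY s' hys hs'S with h1 | ⟨j1, rfl, hj1⟩ | ⟨hi0, rfl⟩ <;>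
          rcases hfilY t' hyt ht'S with h2 | ⟨j2, rfl, hj2⟩ | ⟨hi0', rfl⟩
        · subst h1; exact absurd h2.symm hst2
        · have hjj : j2 = j := Fin.ext (by omega)
          rw [hjj] at ht'S; exact ht'S
        · exfalso; omega
        · have hjj : j1 = j := Fin.ext (by omega)
          rw [hjj] at hs'S; exact hs'S
        · exfalso
          have : j1 = j2 := Fin.ext (by omega)
          rw [this] at hst2
          exact hst2 rfl
        · exfalso; omega
        · exfalso; omega
        · exfalso; omega
        · exact absurd rfl hst2
      -- monochromatic square: contradiction
      have hb : (j:ℕ) + 1 < l := by have := i.isLt; omega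
      have e1 : Fx l f (j:ℕ) % 2 = p := by rw [Fx_fin]; exact hs _ hxj
      have e2 : Fy l f (j:ℕ) % 2 = p := by rw [Fy_fin]; exact hs _ hyj
      have e3 : Fx l f ((j:ℕ)+1) % 2 = p := by rw [hj, Fx_fin]; exact hs _ hzmem
      have e4 : Fy l f ((j:ℕ)+1) % 2 = p := by rw [hj, Fy_fin]; exact hs _ hyi
      exact noSquare hf p (j:ℕ) hb ⟨e1, e2, e3, e4⟩
    · left
      have hieq : i = ⟨0, by omega⟩ := Fin.ext hi0
      refine ⟨huS, ?_, ?_⟩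
      · rw [← hieq]; exact hzmem
      · rw [← hieq]; exact hyi
  | y i =>
    have hfil : ∀ w, (GLGraph l).Adj (.y i) w → w ∈ wk.support →
        (w = .x i ∨ (∃ j : Fin l, w = .y j ∧ (j:ℕ) + 1 = (i:ℕ))
          ∨ ((i:ℕ) = 0 ∧ w = .u)) := by
      intro w hw hwS
      have hle := hmax w hwS
      rcases nbr_y i hw with h | ⟨j, rfl, hj | hj⟩ | ⟨rfl, h0⟩ | ⟨rfl, hlm⟩
      · exact Or.inl h
      · exfalso
        have hle' : (j:ℕ) + 1 ≤ (i:ℕ) + 1 := hle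
        omega
      · exact Or.inr (Or.inl ⟨j, rfl, hj⟩)
      · exact Or.inr (Or.inr ⟨h0, rfl⟩)
      · exfalso
        have hle' : l + 1 ≤ (i:ℕ) + 1 := hle
        have := i.isLt
        omega
    have hxiS : GLVert.x i ∈ wk.support ∧
        ((∃ j : Fin l, (j:ℕ) + 1 = (i:ℕ) ∧ GLVert.y j ∈ wk.support)
          ∨ ((i:ℕ) = 0 ∧ GLVert.u ∈ wk.support)) := by
      rcases hfil s hzs hsS with h1 | ⟨j1, rfl, hj1⟩ | ⟨hi0, rfl⟩ <;>
        rcases hfil t hzt htS with h2 | ⟨j2, rfl, hj2⟩ | ⟨hi0', rfl⟩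
      · subst h1; exact absurd h2.symm hst
      · subst h1; exact ⟨hsS, Or.inl ⟨j2, hj2, htS⟩⟩
      · subst h1; exact ⟨hsS, Or.inr ⟨hi0', htS⟩⟩
      · subst h2; exact ⟨htS, Or.inl ⟨j1, hj1, hsS⟩⟩
      · exfalso
        have : j1 = j2 := Fin.ext (by omega)
        rw [this] at hst
        exact hst rfl
      · exfalso; omega
      · subst h2; exact ⟨htS, Or.inr ⟨hi0, hsS⟩⟩
      · exfalso; omega
      · exact absurd rfl hst
    obtain ⟨hxi, hrest⟩ := hxiS
    rcases hrest with ⟨j, hj, hyj⟩ | ⟨hi0, huS⟩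
    · exfalso
      obtain ⟨s', t', hst2, hxs, hxt, hs'S, ht'S⟩ := nbr_of_cycle hcy hxi
      have hfilX : ∀ w, (GLGraph l).Adj (.x i) w → w ∈ wk.support →
          (w = .y i ∨ (∃ j' : Fin l, w = .x j' ∧ (j':ℕ) + 1 = (i:ℕ))
            ∨ ((i:ℕ) = 0 ∧ w = .u)) := by
        intro w hw hwS
        have hle := hmax w hwS
        rcases nbr_x i hw with h | ⟨j', rfl, hj' | hj'⟩ | ⟨rfl, h0⟩ | ⟨rfl, hlm⟩
        · exact Or.inl h
        · exfalso
          have hle' : (j':ℕ) + 1 ≤ (i:ℕ) + 1 := hle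
          omega
        · exact Or.inr (Or.inl ⟨j', rfl, hj'⟩)
        · exact Or.inr (Or.inr ⟨h0, rfl⟩)
        · exfalso
          have hle' : l + 1 ≤ (i:ℕ) + 1 := hle
          have := i.isLt
          omega
      have hxj : GLVert.x j ∈ wk.support := by
        rcases hfilX s' hxs hs'S with h1 | ⟨j1, rfl, hj1⟩ | ⟨hi0, rfl⟩ <;>
          rcases hfilX t' hxt ht'S with h2 | ⟨j2, rfl, hj2⟩ | ⟨hi0', rfl⟩
        · subst h1; exact absurd h2.symm hst2
        · have hjj : j2 = j := Fin.ext (by omega)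
          rw [hjj] at ht'S; exact ht'S
        · exfalso; omega
        · have hjj : j1 = j := Fin.ext (by omega)
          rw [hjj] at hs'S; exact hs'S
        · exfalso
          have : j1 = j2 := Fin.ext (by omega)
          rw [this] at hst2
          exact hst2 rfl
        · exfalso; omega
        · exfalso; omega
        · exfalso; omega
        · exact absurd rfl hst2
      have hb : (j:ℕ) + 1 < l := by have := i.isLt; omega
      have e1 : Fx l f (j:ℕ) % 2 = p := by rw [Fx_fin]; exact hs _ hxj
      have e2 : Fy l f (j:ℕ) % 2 = p := by rw [Fy_fin]; exact hs _ hyj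
      have e3 : Fx l f ((j:ℕ)+1) % 2 = p := by rw [hj, Fx_fin]; exact hs _ hxi
      have e4 : Fy l f ((j:ℕ)+1) % 2 = p := by rw [hj, Fy_fin]; exact hs _ hzmem
      exact noSquare hf p (j:ℕ) hb ⟨e1, e2, e3, e4⟩
    · left
      have hieq : i = ⟨0, by omega⟩ := Fin.ext hi0
      refine ⟨huS, ?_, ?_⟩
      · rw [← hieq]; exact hxi
      · rw [← hieq]; exact hzmem

/-! ### Components containing an end-triangle are exactly that triangle -/

lemma compU {l : ℕ} {f : GLVert l → ℕ} (hf : IsKL21Labeling (GLGraph l) 5 f) (hl : 3 ≤ l)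
    {p : ℕ} {T : Set (GLVert l)}
    (hcomp : IsCompOf (GLGraph l) {w | f w % 2 = p} T)
    (hu : GLVert.u ∈ T) (hx : GLVert.x ⟨0, by omega⟩ ∈ T)
    (hy : GLVert.y ⟨0, by omega⟩ ∈ T) :
    T = {GLVert.u, GLVert.x ⟨0, by omega⟩, GLVert.y ⟨0, by omega⟩} := by
  obtain ⟨c, hT⟩ := hcomp
  have hmemP : ∀ w ∈ T, f w % 2 = p := by
    intro w hw
    rw [hT] at hw
    obtain ⟨w', _, rfl⟩ := hw
    exact w'.2
  have hpu : f GLVert.u % 2 = p := hmemP _ hu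
  have hpx : Fx l f 0 % 2 = p := by
    rw [Fx_eq f (show 0 < l by omega)]; exact hmemP _ hx
  have hpy : Fy l f 0 % 2 = p := by
    rw [Fy_eq f (show 0 < l by omega)]; exact hmemP _ hy
  have hnext := parityNextU hf hl p hpu hpx hpy
  apply Set.eq_of_subset_of_subset
  · intro w hw
    rw [hT] at hw hu
    obtain ⟨w', hw'c, rfl⟩ := hw
    obtain ⟨u', hu'c, hu'⟩ := hu
    have hreach : ((GLGraph l).induce {w | f w % 2 = p}).Reachable w' u' :=
      SimpleGraph.ConnectedComponent.exact (hw'c.trans hu'c.symm)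
    obtain ⟨W⟩ := hreach
    have hclaim : ∀ (a b : {w : GLVert l // w ∈ {w | f w % 2 = p}})
        (_ : ((GLGraph l).induce {w | f w % 2 = p}).Walk a b),
        (b : GLVert l) ∈ ({GLVert.u, GLVert.x ⟨0, by omega⟩, GLVert.y ⟨0, by omega⟩} : Set (GLVert l)) →
        (a : GLVert l) ∈ ({GLVert.u, GLVert.x ⟨0, by omega⟩, GLVert.y ⟨0, by omega⟩} : Set (GLVert l)) := by
      intro a b Wab
      induction Wab with
      | nil => exact id
      | @cons a m b ha Wab ih =>
        intro hbK
        have hmK := ih hbK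
        have hadj : (GLGraph l).Adj (a : GLVert l) (m : GLVert l) := ha
        simp only [Set.mem_insert_iff, Set.mem_singleton_iff] at hmK ⊢
        rcases hmK with hm | hm | hm
        · -- m = u
          rw [hm] at hadj
          rcases nbr_u (show 0 < l by omega) hadj.symm with h | h
          · exact Or.inr (Or.inl h)
          · exact Or.inr (Or.inr h)
        · -- m = x 0
          rw [hm] at hadj
          rcases nbr_x _ hadj.symm with h | ⟨j, hja, hj | hj⟩ | ⟨h, _⟩ | ⟨h, hc0⟩
          · exact Or.inr (Or.inr h)
          · exfalso
            have hj1 : (0:ℕ) + 1 = (j:ℕ) := hj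
            have ha2 : f (a : GLVert l) % 2 = p := a.2
            rw [hja] at ha2
            apply hnext.1
            have hjv : (j:ℕ) = 1 := by omega
            rw [← hjv, Fx_fin]
            exact ha2
          · exfalso
            have hj1 : (j:ℕ) + 1 = ((⟨0, by omega⟩ : Fin l):ℕ) := hj
            have : (j:ℕ) + 1 = 0 := hj1
            omega
          · exact Or.inl h
          · exfalso
            have h0 : ((⟨0, by omega⟩ : Fin l):ℕ) = l - 1 := hc0
            have : (0:ℕ) = l - 1 := h0
            omega
        · -- m = y 0
          rw [hm] at hadj
          rcases nbr_y _ hadj.symm with h | ⟨j, hja, hj | hj⟩ | ⟨h, _⟩ | ⟨h, hc0⟩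
          · exact Or.inr (Or.inl h)
          · exfalso
            have hj1 : (0:ℕ) + 1 = (j:ℕ) := hj
            have ha2 : f (a : GLVert l) % 2 = p := a.2
            rw [hja] at ha2
            apply hnext.2
            have hjv : (j:ℕ) = 1 := by omega
            rw [← hjv, Fy_fin]
            exact ha2
          · exfalso
            have hj1 : (j:ℕ) + 1 = 0 := hj
            omega
          · exact Or.inl h
          · exfalso
            have h0 : (0:ℕ) = l - 1 := hc0
            omega
    apply hclaim w' u' W
    rw [hu']
    exact Set.mem_insert _ _
  · intro w hw
    simp only [Set.mem_insert_iff, Set.mem_singleton_iff] at hw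
    rcases hw with rfl | rfl | rfl
    · exact hu
    · exact hx
    · exact hy

lemma compV {l : ℕ} {f : GLVert l → ℕ} (hf : IsKL21Labeling (GLGraph l) 5 f) (hl : 3 ≤ l)
    {p : ℕ} {T : Set (GLVert l)}
    (hcomp : IsCompOf (GLGraph l) {w | f w % 2 = p} T)
    (hv : GLVert.v ∈ T) (hx : GLVert.x ⟨l-1, by omega⟩ ∈ T)
    (hy : GLVert.y ⟨l-1, by omega⟩ ∈ T) :
    T = {GLVert.v, GLVert.x ⟨l-1, by omega⟩, GLVert.y ⟨l-1, by omega⟩} := by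
  obtain ⟨c, hT⟩ := hcomp
  have hmemP : ∀ w ∈ T, f w % 2 = p := by
    intro w hw
    rw [hT] at hw
    obtain ⟨w', _, rfl⟩ := hw
    exact w'.2
  have hpv : f GLVert.v % 2 = p := hmemP _ hv
  have hpx : Fx l f (l-1) % 2 = p := by
    rw [Fx_eq f (show l - 1 < l by omega)]; exact hmemP _ hx
  have hpy : Fy l f (l-1) % 2 = p := by
    rw [Fy_eq f (show l - 1 < l by omega)]; exact hmemP _ hy
  have hnext := parityNextV hf hl p hpv hpx hpy
  apply Set.eq_of_subset_of_subset
  · intro w hw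
    rw [hT] at hw hv
    obtain ⟨w', hw'c, rfl⟩ := hw
    obtain ⟨v', hv'c, hv'⟩ := hv
    have hreach : ((GLGraph l).induce {w | f w % 2 = p}).Reachable w' v' :=
      SimpleGraph.ConnectedComponent.exact (hw'c.trans hv'c.symm)
    obtain ⟨W⟩ := hreach
    have hclaim : ∀ (a b : {w : GLVert l // w ∈ {w | f w % 2 = p}})
        (_ : ((GLGraph l).induce {w | f w % 2 = p}).Walk a b),
        (b : GLVert l) ∈ ({GLVert.v, GLVert.x ⟨l-1, by omega⟩, GLVert.y ⟨l-1, by omega⟩} : Set (GLVert l)) →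
        (a : GLVert l) ∈ ({GLVert.v, GLVert.x ⟨l-1, by omega⟩, GLVert.y ⟨l-1, by omega⟩} : Set (GLVert l)) := by
      intro a b Wab
      induction Wab with
      | nil => exact id
      | @cons a m b ha Wab ih =>
        intro hbK
        have hmK := ih hbK
        have hadj : (GLGraph l).Adj (a : GLVert l) (m : GLVert l) := ha
        simp only [Set.mem_insert_iff, Set.mem_singleton_iff] at hmK ⊢
        rcases hmK with hm | hm | hm
        · -- m = v
          rw [hm] at hadj
          rcases nbr_v (show 0 < l by omega) hadj.symm with h | h
          · exact Or.inr (Or.inl h)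
          · exact Or.inr (Or.inr h)
        · -- m = x (l-1)
          rw [hm] at hadj
          rcases nbr_x _ hadj.symm with h | ⟨j, hja, hj | hj⟩ | ⟨h, hc0⟩ | ⟨h, _⟩
          · exact Or.inr (Or.inr h)
          · exfalso
            have hj1 : (l-1:ℕ) + 1 = (j:ℕ) := hj
            have := j.isLt
            omega
          · exfalso
            have hj1 : (j:ℕ) + 1 = (l-1:ℕ) := hj
            have ha2 : f (a : GLVert l) % 2 = p := a.2
            rw [hja] at ha2
            apply hnext.1
            have hjv : (j:ℕ) = l - 2 := by omega
            rw [← hjv, Fx_fin]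
            exact ha2
          · exfalso
            have h0 : (l-1:ℕ) = 0 := hc0
            omega
          · exact Or.inl h
        · -- m = y (l-1)
          rw [hm] at hadj
          rcases nbr_y _ hadj.symm with h | ⟨j, hja, hj | hj⟩ | ⟨h, hc0⟩ | ⟨h, _⟩
          · exact Or.inr (Or.inl h)
          · exfalso
            have hj1 : (l-1:ℕ) + 1 = (j:ℕ) := hj
            have := j.isLt
            omega
          · exfalso
            have hj1 : (j:ℕ) + 1 = (l-1:ℕ) := hj
            have ha2 : f (a : GLVert l) % 2 = p := a.2
            rw [hja] at ha2
            apply hnext.2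
            have hjv : (j:ℕ) = l - 2 := by omega
            rw [← hjv, Fy_fin]
            exact ha2
          · exfalso
            have h0 : (l-1:ℕ) = 0 := hc0
            omega
          · exact Or.inl h
    apply hclaim w' v' W
    rw [hv']
    exact Set.mem_insert _ _
  · intro w hw
    simp only [Set.mem_insert_iff, Set.mem_singleton_iff] at hw
    rcases hw with rfl | rfl | rfl
    · exact hv
    · exact hx
    · exact hy

theorem stmt5 (l : ℕ) (hl : 3 ≤ l) (f : GLVert l → ℕ)
    (hf : IsKL21Labeling (GLGraph l) 5 f)
    (T : Set (GLVert l))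
    (hT : IsCompOf (GLGraph l) (H1Set l f) T ∨ IsCompOf (GLGraph l) (H2Set l f) T) :
    (¬ 3 ∣ l → ¬ HasCycleIn (GLGraph l) T) ∧
    (3 ∣ l → IsTriangleSet (GLGraph l) T ∨ ¬ HasCycleIn (GLGraph l) T) := by
  classical
  have hMAIN : ∀ p : ℕ, IsCompOf (GLGraph l) {w | f w % 2 = p} T →
      HasCycleIn (GLGraph l) T → 3 ∣ l ∧ IsTriangleSet (GLGraph l) T := by
    intro p hcomp hcyc
    obtain ⟨r, wk, hcy, hsupT⟩ := hcyc
    have hTP : ∀ w ∈ T, f w % 2 = p := by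
      intro w hw
      obtain ⟨c, hTeq⟩ := hcomp
      rw [hTeq] at hw
      obtain ⟨w', _, rfl⟩ := hw
      exact w'.2
    have hs : ∀ z ∈ wk.support, f z % 2 = p := fun z hz => hTP _ (hsupT z hz)
    rcases cyc hf hl p hcy hs with ⟨h1, h2, h3⟩ | ⟨h1, h2, h3⟩
    · have hdiv : 3 ∣ l := triU hf hl p (hs _ h1)
        (by rw [Fx_eq f (show 0 < l by omega)]; exact hs _ h2)
        (by rw [Fy_eq f (show 0 < l by omega)]; exact hs _ h3)
      refine ⟨hdiv, ?_⟩
      have hTeq := compU hf hl hcomp (hsupT _ h1) (hsupT _ h2) (hsupT _ h3)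
      exact ⟨GLVert.u, GLVert.x ⟨0, by omega⟩, GLVert.y ⟨0, by omega⟩,
        fun hc => (by cases hc), fun hc => (by cases hc),
        fun hc => (by cases hc), hTeq, adj_ux rfl, adj_xy _, adj_uy rfl⟩
    · have hdiv : 3 ∣ l := triV hf hl p (hs _ h1)
        (by rw [Fx_eq f (show l - 1 < l by omega)]; exact hs _ h2)
        (by rw [Fy_eq f (show l - 1 < l by omega)]; exact hs _ h3)
      refine ⟨hdiv, ?_⟩
      have hTeq := compV hf hl hcomp (hsupT _ h1) (hsupT _ h2) (hsupT _ h3)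
      exact ⟨GLVert.v, GLVert.x ⟨l-1, by omega⟩, GLVert.y ⟨l-1, by omega⟩,
        fun hc => (by cases hc), fun hc => (by cases hc),
        fun hc => (by cases hc), hTeq, (adj_xv rfl).symm, adj_xy _, (adj_yv rfl).symm⟩
  have hH1 : H1Set l f = {w | f w % 2 = 0} := by
    ext w
    have := hf.2 w
    simp only [H1Set, Set.mem_setOf_eq]
    omega
  have hH2 : H2Set l f = {w | f w % 2 = 1} := by
    ext w
    have := hf.2 w
    simp only [H2Set, Set.mem_setOf_eq]
    omega
  have hkey : HasCycleIn (GLGraph l) T → 3 ∣ l ∧ IsTriangleSet (GLGraph l) T := by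
    rcases hT with hT | hT
    · rw [hH1] at hT
      exact hMAIN 0 hT
    · rw [hH2] at hT
      exact hMAIN 1 hT
  constructor
  · intro h3 hc
    exact h3 (hkey hc).1
  · intro _
    by_cases hc : HasCycleIn (GLGraph l) T
    · exact Or.inl (hkey hc).2
    · exact Or.inr hc
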